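/- Let g₁ = [[a₁,b₁],[conj b₁, conj a₁]] and g₂ = [[a₂,b₂],[conj b₂, conj a₂]] be elements of SU(1,1), and let a₃ = a₁·a₂ + b₁·conj(b₂) be the top-left entry of the matrix product g₁·g₂. Then a₁ ≠ 0, a₂ ≠ 0, and |a₃/(a₁·a₂) − 1| < 1. (This makes the Berezin–Guichardet cocycle c(g₁,g₂) = log(a₃/(a₁a₂)) well defined.) -/

import Mathlib

open ComplexConjugate

/-- For `g₁, g₂ ∈ SU(1,1)` with top-left entries `a₁, a₂`, the top-left entry
`a₃ = a₁a₂ + b₁·conj b₂` of `g₁g₂` satisfies `a₁ ≠ 0`, `a₂ ≠ 0` and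
`|a₃/(a₁a₂) − 1| < 1`, so the Berezin–Guichardet cocycle `log(a₃/(a₁a₂))` is well defined. -/
theorem stmt_1 (a₁ b₁ a₂ b₂ : ℂ)
    (h₁ : ‖a₁‖ ^ 2 - ‖b₁‖ ^ 2 = 1)
    (h₂ : ‖a₂‖ ^ 2 - ‖b₂‖ ^ 2 = 1) :
    a₁ ≠ 0 ∧ a₂ ≠ 0 ∧
      ‖(a₁ * a₂ + b₁ * conj b₂) / (a₁ * a₂) - 1‖ < 1 := by
  have hb1 : ‖b₁‖ ^ 2 < ‖a₁‖ ^ 2 := by linarith [sq_nonneg (‖b₁‖)]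
  have hb2 : ‖b₂‖ ^ 2 < ‖a₂‖ ^ 2 := by linarith [sq_nonneg (‖b₂‖)]
  have ha1 : (0:ℝ) < ‖a₁‖ := by
    nlinarith [norm_nonneg a₁, sq_nonneg (‖b₁‖)]
  have ha2 : (0:ℝ) < ‖a₂‖ := by
    nlinarith [norm_nonneg a₂, sq_nonneg (‖b₂‖)]
  have h1 : a₁ ≠ 0 := by simpa using norm_ne_zero_iff.mp (ne_of_gt ha1)
  have h2 : a₂ ≠ 0 := by simpa using norm_ne_zero_iff.mp (ne_of_gt ha2)
  refine ⟨h1, h2, ?_⟩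
  have key : (a₁ * a₂ + b₁ * conj b₂) / (a₁ * a₂) - 1 = b₁ * conj b₂ / (a₁ * a₂) := by
    field_simp
    ring
  rw [key, norm_div, norm_mul, norm_mul, Complex.norm_conj]
  rw [div_lt_one (by positivity)]
  have hb1' : ‖b₁‖ < ‖a₁‖ := by
    nlinarith [norm_nonneg b₁]
  have hb2' : ‖b₂‖ < ‖a₂‖ := by
    nlinarith [norm_nonneg b₂]
  exact mul_lt_mul' hb1'.le hb2' (norm_nonneg b₂) ha1
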